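/- Let (S,·) be a semigroup, let A ⊆ S be a J-set (in the non-commutative sense), let F be a finite nonempty set of sequences f : ℕ → S, and let ⟨x_n⟩_{n=1}^∞ be a sequence in ℕ. Then there exists a sequence ⟨y_n⟩_{n=1}^∞ with FS(⟨y_n⟩_{n=1}^∞) ⊆ FS(⟨x_n⟩_{n=1}^∞) such that every element of FS(⟨y_n⟩_{n=1}^∞), say Σ_{t∈G} x_t with G ⊆ ℕ finite nonempty and G = {t₁ < t₂ < … < t_m}, admits a = (a₁,…,a_{m+1}) ∈ S^{m+1} with a₁·f(x_{t₁})·a₂·f(x_{t₂})·…·a_m·f(x_{t_m})·a_{m+1} ∈ A for every f ∈ F. -/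

import Mathlib

/-- The interleaved product `x(m, a, t, f) = (∏_{j=1}^{m} a(j)·f(t(j))) · a(m+1)`
in a semigroup. -/
def interProd {S : Type*} [Semigroup S] (m : ℕ) (a : Fin (m + 1) → S) (t : Fin m → ℕ)
    (f : ℕ → S) : S :=
  ((List.finRange m).map (fun j => a j.castSucc * f (t j))).foldr (· * ·) (a (Fin.last m))

/-- A set `A` in a semigroup `S` is a J-set (in the non-commutative sense) if for every
finite nonempty set `F` of sequences in `S` there are `m ≥ 1`, `a ∈ S^{m+1}` and
`t(1) < … < t(m)` in `ℕ` such that `a(1)·f(t(1))·a(2)·f(t(2))⋯a(m)·f(t(m))·a(m+1) ∈ A`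
for every `f ∈ F`. -/
def IsJSetNC {S : Type*} [Semigroup S] (A : Set S) : Prop :=
  ∀ F : Finset (ℕ → S), F.Nonempty →
    ∃ m : ℕ, 0 < m ∧ ∃ a : Fin (m + 1) → S, ∃ t : Fin m → ℕ, StrictMono t ∧
      ∀ f ∈ F, interProd m a t f ∈ A

/-- `FS(⟨x_n⟩) = {∑_{n ∈ G} x_n : G a finite nonempty subset of ℕ}`. -/
def FS (x : ℕ → ℕ) : Set ℕ :=
  {s : ℕ | ∃ G : Finset ℕ, G.Nonempty ∧ s = ∑ n ∈ G, x n}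

namespace JAux

set_option linter.unusedSectionVars false

open List

variable {S : Type*} [Semigroup S]

theorem interProd_succ (m : ℕ) (a : Fin (m+2) → S) (t : Fin (m+1) → ℕ) (f : ℕ → S) :
    interProd (m+1) a t f
      = (a 0 * f (t 0)) * interProd m (fun j => a j.succ) (fun j => t j.succ) f := by
  unfold interProd
  rw [List.finRange_succ, List.map_cons, List.foldr_cons, List.map_map]
  show (a (Fin.castSucc 0) * f (t 0)) * _ = _
  rw [Fin.castSucc_zero]
  congr 1

def inner (s₀ : S) (φ : ℕ → S) : List ℕ → S
  | [] => s₀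
  | [c] => φ c
  | c :: d :: l => φ c * s₀ * inner s₀ φ (d :: l)

theorem inner_map (s₀ : S) (f : ℕ → S) (x : ℕ → ℕ) :
    ∀ l : List ℕ, inner s₀ (fun c => f (x c)) l = inner s₀ f (l.map x)
  | [] => rfl
  | [c] => rfl
  | c :: d :: l => by
      simp only [inner, List.map_cons]
      rw [show ((x d) :: l.map x) = ((d :: l).map x) from rfl, ← inner_map s₀ f x (d :: l)]

def ZW (sep : List S) (vals : List ℕ) (f : ℕ → S) : WithOne S :=
  (List.zipWith (fun p c => ((p : WithOne S) * ((f c : S) : WithOne S))) sep vals).prod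

theorem ZW_nil (f : ℕ → S) : ZW ([] : List S) ([] : List ℕ) f = 1 := rfl

theorem ZW_cons (p : S) (sep : List S) (c : ℕ) (vals : List ℕ) (f : ℕ → S) :
    ZW (p :: sep) (c :: vals) f
      = (((p : S) : WithOne S) * ((f c : S) : WithOne S)) * ZW sep vals f := by
  simp [ZW]

theorem ZW_append (f : ℕ → S) :
    ∀ (s₁ : List S) (v₁ : List ℕ) (s₂ : List S) (v₂ : List ℕ),
      s₁.length = v₁.length →
      ZW (s₁ ++ s₂) (v₁ ++ v₂) f = ZW s₁ v₁ f * ZW s₂ v₂ f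
  | [], [], s₂, v₂, _ => by simp [ZW_nil]
  | p :: s₁, c :: v₁, s₂, v₂, h => by
      have h' : s₁.length = v₁.length := by simpa using h
      simp only [List.cons_append]
      rw [ZW_cons, ZW_cons, ZW_append f s₁ v₁ s₂ v₂ h']
      simp [mul_assoc]
  | [], _ :: _, _, _, h => by simp at h
  | _ :: _, [], _, _, h => by simp at h

theorem coe_interProd (s₀ : S) :
    ∀ (vals : List ℕ) (sep : List S), sep.length = vals.length → ∀ (aL : S)
      (a' : Fin (vals.length + 1) → S),
      (∀ i : Fin (vals.length + 1), a' i = (sep ++ [aL]).getD i s₀) →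
      ∀ (t' : Fin vals.length → ℕ), (∀ i : Fin vals.length, t' i = vals.getD i 0) →
      ∀ f : ℕ → S,
      ((interProd vals.length a' t' f : S) : WithOne S) = ZW sep vals f * ((aL : S) : WithOne S)
  | [], sep, hlen, aL, a', ha', t', ht', f => by
      have hsep : sep = [] := List.length_eq_zero_iff.mp hlen
      subst hsep
      show ((a' (Fin.last 0) : S) : WithOne S) = _
      rw [ha' (Fin.last 0)]
      show ((aL : S) : WithOne S) = ZW [] [] f * _
      rw [ZW_nil, one_mul]
  | c :: vals, sep, hlen, aL, a', ha', t', ht', f => by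
      match sep with
      | [] => simp at hlen
      | p :: sep =>
        have hlen' : sep.length = vals.length := by simpa using hlen
        show ((interProd (vals.length + 1) a' t' f : S) : WithOne S) = _
        rw [interProd_succ, WithOne.coe_mul, WithOne.coe_mul]
        rw [coe_interProd s₀ vals sep hlen' aL (fun j => a' j.succ)
          (fun j => by
            show a' j.succ = _
            rw [ha' j.succ]
            simp [List.cons_append, Fin.val_succ])
          (fun j => t' j.succ)
          (fun j => by
            show t' j.succ = _
            rw [ht' j.succ]
            simp [Fin.val_succ])
          f]
        have h1 : a' (0 : Fin (vals.length + 1 + 1)) = p := by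
          have := ha' (0 : Fin (vals.length + 1 + 1))
          simpa using this
        have h2 : t' (0 : Fin (vals.length + 1)) = c := by
          have := ht' (0 : Fin (vals.length + 1))
          simpa using this
        rw [ZW_cons, h1, h2]
        simp [mul_assoc]

theorem coe_interProd' (s₀ : S) (vals : List ℕ) (sep : List S)
    (hlen : sep.length = vals.length) (aL : S) (m : ℕ) (hm : m = vals.length)
    (a' : Fin (m + 1) → S)
    (ha' : ∀ i : Fin (m + 1), a' i = (sep ++ [aL]).getD i s₀)
    (t' : Fin m → ℕ) (ht' : ∀ i : Fin m, t' i = vals.getD i 0) (f : ℕ → S) :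
    ((interProd m a' t' f : S) : WithOne S) = ZW sep vals f * ((aL : S) : WithOne S) := by
  subst hm
  exact coe_interProd s₀ vals sep hlen aL a' ha' t' ht' f

theorem ZW_inner (f : ℕ → S) (s₀ : S) :
    ∀ (cs : List ℕ) (h : S) (c : ℕ),
      ZW (h :: List.replicate cs.length s₀) (c :: cs) f
        = ((h : S) : WithOne S) * ((inner s₀ f (c :: cs) : S) : WithOne S)
  | [], h, c => by
      show ZW [h] [c] f = _
      rw [show ([h] : List S) = h :: ([] : List S) from rfl,
        show ([c] : List ℕ) = c :: ([] : List ℕ) from rfl, ZW_cons, ZW_nil, mul_one]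
      rfl
  | d :: cs, h, c => by
      rw [show (d :: cs).length = cs.length + 1 from rfl, List.replicate_succ, ZW_cons,
        ZW_inner f s₀ cs s₀ d]
      rw [show inner s₀ f (c :: d :: cs) = f c * s₀ * inner s₀ f (d :: cs) from rfl]
      rw [WithOne.coe_mul, WithOne.coe_mul]
      simp [mul_assoc]

def flatJ : (m : ℕ) → (Fin m → List ℕ) → List ℕ
  | 0, _ => []
  | m+1, L => L 0 ++ flatJ m (fun j => L j.succ)

def sepJ (s₀ : S) : (m : ℕ) → (Fin (m+1) → S) → (Fin m → List ℕ) → List S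
  | 0, _, _ => []
  | m+1, a, L => (a 0 :: List.replicate ((L 0).length - 1) s₀)
      ++ sepJ s₀ m (fun j => a j.succ) (fun j => L j.succ)

theorem sepJ_length (s₀ : S) :
    ∀ (m : ℕ) (a : Fin (m+1) → S) (L : Fin m → List ℕ), (∀ j, L j ≠ []) →
      (sepJ s₀ m a L).length = (flatJ m L).length
  | 0, _, _, _ => rfl
  | m+1, a, L, hL => by
      obtain ⟨c, cs, hc⟩ : ∃ c cs, L 0 = c :: cs := by
        cases h : L 0 with
        | nil => exact absurd h (hL 0)
        | cons c cs => exact ⟨c, cs, rfl⟩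
      show ((a 0 :: List.replicate ((L 0).length - 1) s₀)
          ++ sepJ s₀ m (fun j => a j.succ) (fun j => L j.succ)).length
        = (L 0 ++ flatJ m (fun j => L j.succ)).length
      simp only [List.length_append, List.length_cons, List.length_replicate, hc]
      rw [sepJ_length s₀ m (fun j => a j.succ) (fun j => L j.succ) (fun j => hL j.succ)]
      simp

theorem mem_flatJ : ∀ (m : ℕ) (L : Fin m → List ℕ) (b : ℕ),
    b ∈ flatJ m L ↔ ∃ j, b ∈ L j
  | 0, L, b => by
      show b ∈ ([] : List ℕ) ↔ _
      simp only [List.not_mem_nil, false_iff]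
      rintro ⟨j, _⟩; exact j.elim0
  | m+1, L, b => by
      show b ∈ L 0 ++ flatJ m (fun j => L j.succ) ↔ _
      rw [List.mem_append, mem_flatJ m (fun j => L j.succ) b]
      constructor
      · rintro (h | ⟨j, h⟩)
        · exact ⟨0, h⟩
        · exact ⟨j.succ, h⟩
      · rintro ⟨j, h⟩
        rcases Fin.eq_zero_or_eq_succ j with rfl | ⟨j', rfl⟩
        · exact Or.inl h
        · exact Or.inr ⟨j', h⟩

theorem flatJ_sorted : ∀ (m : ℕ) (L : Fin m → List ℕ),
    (∀ j, (L j).Pairwise (· < ·)) →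
    (∀ j j' : Fin m, j < j' → ∀ i ∈ L j, ∀ b ∈ L j', i < b) →
    (flatJ m L).Pairwise (· < ·)
  | 0, _, _, _ => List.Pairwise.nil
  | m+1, L, hs, hc => by
      show (L 0 ++ flatJ m (fun j => L j.succ)).Pairwise (· < ·)
      rw [List.pairwise_append]
      refine ⟨hs 0, ?_, ?_⟩
      · exact flatJ_sorted m (fun j => L j.succ) (fun j => hs j.succ)
          (fun j j' hjj' => hc j.succ j'.succ (Fin.succ_lt_succ_iff.mpr hjj'))
      · intro i hi b hb
        rw [mem_flatJ] at hb
        obtain ⟨j, hj⟩ := hb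
        exact hc 0 j.succ (Fin.succ_pos j) i hi b hj

theorem flatJ_map (x : ℕ → ℕ) : ∀ (m : ℕ) (L : Fin m → List ℕ),
    flatJ m (fun j => (L j).map x) = (flatJ m L).map x
  | 0, _ => rfl
  | m+1, L => by
      show (L 0).map x ++ flatJ m (fun j => (L j.succ).map x) = _
      rw [show flatJ (m+1) L = L 0 ++ flatJ m (fun j => L j.succ) from rfl, List.map_append,
        flatJ_map x m (fun j => L j.succ)]

theorem flatJ_map_sum (x : ℕ → ℕ) : ∀ (m : ℕ) (L : Fin m → List ℕ),
    ((flatJ m L).map x).sum = ∑ j : Fin m, ((L j).map x).sum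
  | 0, _ => by simp [flatJ]
  | m+1, L => by
      rw [show flatJ (m+1) L = L 0 ++ flatJ m (fun j => L j.succ) from rfl]
      rw [List.map_append, List.sum_append, Fin.sum_univ_succ,
        flatJ_map_sum x m (fun j => L j.succ)]

theorem assemble (s₀ : S) (f : ℕ → S) :
    ∀ (m : ℕ) (a : Fin (m+1) → S) (t : Fin m → ℕ) (L : Fin m → List ℕ),
      (∀ j, L j ≠ []) → ∀ (g : ℕ → S), (∀ j, g (t j) = inner s₀ f (L j)) →
      ZW (sepJ s₀ m a L) (flatJ m L) f * ((a (Fin.last m) : S) : WithOne S)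
        = ((interProd m a t g : S) : WithOne S)
  | 0, a, t, L, hL, g, hg => by
      show (1 : WithOne S) * ((a (Fin.last 0) : S) : WithOne S) = _
      rw [one_mul]
      rfl
  | m+1, a, t, L, hL, g, hg => by
      obtain ⟨c, cs, hc⟩ : ∃ c cs, L 0 = c :: cs := by
        cases h : L 0 with
        | nil => exact absurd h (hL 0)
        | cons c cs => exact ⟨c, cs, rfl⟩
      rw [interProd_succ, WithOne.coe_mul, WithOne.coe_mul]
      rw [← assemble s₀ f m (fun j => a j.succ) (fun j => t j.succ) (fun j => L j.succ)
        (fun j => hL j.succ) g (fun j => hg j.succ)]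
      rw [show sepJ s₀ (m+1) a L = (a 0 :: List.replicate ((L 0).length - 1) s₀)
          ++ sepJ s₀ m (fun j => a j.succ) (fun j => L j.succ) from rfl,
        show flatJ (m+1) L = L 0 ++ flatJ m (fun j => L j.succ) from rfl]
      rw [ZW_append f _ _ _ _ (by simp [hc])]
      rw [hc, show (c :: cs).length - 1 = cs.length from rfl, ZW_inner]
      rw [hg 0, hc]
      rw [show Fin.succ (Fin.last m) = Fin.last (m+1) from rfl]
      rw [mul_assoc, mul_assoc]


theorem interProd_cast {m n : ℕ} (h : m = n) (a : Fin (m+1) → S) (t : Fin m → ℕ) (f : ℕ → S) :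
    interProd m a t f
      = interProd n (fun i => a (Fin.cast (by rw [h]) i)) (fun i => t (Fin.cast h.symm i)) f := by
  subst h
  rfl

theorem sort_map_sum (x : ℕ → ℕ) (s : Finset ℕ) :
    ((s.sort (· ≤ ·)).map x).sum = ∑ i ∈ s, x i := by
  classical
  rw [← List.sum_toFinset _ (Finset.sort_nodup _ _), Finset.sort_toFinset]

theorem claimA {A : Set S} (hA : IsJSetNC A) (F : Finset (ℕ → S)) (hF : F.Nonempty) (x : ℕ → ℕ)
    (C : ℕ → Finset ℕ) (hne : ∀ k, (C k).Nonempty)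
    (hinc : ∀ k l : ℕ, k < l → ∀ i ∈ C k, ∀ j ∈ C l, i < j) :
    ∃ T : Finset ℕ, T.Nonempty ∧
      (∑ k ∈ T, ∑ i ∈ C k, x i) ∈
        {s : ℕ | ∃ G : Finset ℕ, G.Nonempty ∧ s = ∑ u ∈ G, x u ∧
          ∃ a : Fin (G.card + 1) → S,
            ∀ f ∈ F, interProd G.card a (fun j => x ((G.orderIsoOfFin rfl j : ℕ))) f ∈ A} := by
  classical
  have hF2 := hF
  obtain ⟨f₀, _⟩ := hF2
  set s₀ : S := f₀ 0 with hs₀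
  set gseq : (ℕ → S) → (ℕ → S) :=
    fun f k => inner s₀ (fun c => f (x c)) ((C k).sort (· ≤ ·)) with hgseq
  obtain ⟨mW, hmW, a, t, ht, hw⟩ := hA (F.image gseq) (Finset.Nonempty.image hF gseq)
  set Lraw : Fin mW → List ℕ := fun j => (C (t j)).sort (· ≤ ·) with hLraw
  have hLne : ∀ j, Lraw j ≠ [] := fun j =>
    List.length_pos_iff.mp (by rw [hLraw]; simp only [Finset.length_sort]
                               exact Finset.card_pos.mpr (hne (t j)))
  set flat : List ℕ := flatJ mW Lraw with hflat
  have hsorted : flat.Pairwise (· < ·) := by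
    apply flatJ_sorted
    · intro j
      exact List.sortedLT_iff_pairwise.mp (Finset.sortedLT_sort _)
    · intro j j' hjj' i hi b hb
      exact hinc (t j) (t j') (ht hjj') i (Finset.mem_sort _ |>.mp hi) b
        (Finset.mem_sort _ |>.mp hb)
  have hnodup : flat.Nodup := List.Pairwise.imp (fun h => ne_of_lt h) hsorted
  set G : Finset ℕ := flat.toFinset with hG
  have hGsort : G.sort (· ≤ ·) = flat :=
    (List.toFinset_sort (· ≤ ·) hnodup).mpr (List.Pairwise.imp (fun h => le_of_lt h) hsorted)
  have hcard : G.card = flat.length := by rw [← hGsort, Finset.length_sort]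
  have hGne : G.Nonempty := by
    obtain ⟨i, hi⟩ := hne (t ⟨0, hmW⟩)
    refine ⟨i, List.mem_toFinset.mpr ?_⟩
    rw [hflat, mem_flatJ]
    exact ⟨⟨0, hmW⟩, (Finset.mem_sort _).mpr hi⟩
  refine ⟨Finset.image t Finset.univ, ⟨t ⟨0, hmW⟩, Finset.mem_image_of_mem _ (Finset.mem_univ _)⟩,
    G, hGne, ?_, ?_⟩
  · -- sums agree
    rw [Finset.sum_image (fun i _ j _ h => ht.injective h)]
    have h1 : ∑ u ∈ G, x u = (flat.map x).sum := List.sum_toFinset _ hnodup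
    rw [h1, hflat, flatJ_map_sum]
    refine Finset.sum_congr rfl (fun j _ => ?_)
    exact (sort_map_sum x (C (t j))).symm
  · -- certificate
    set Lb : Fin mW → List ℕ := fun j => (Lraw j).map x with hLb
    set vals : List ℕ := flat.map x with hvals
    set sep : List S := sepJ s₀ mW a Lb with hsep
    set aL : S := a (Fin.last mW) with haL
    refine ⟨fun i => (sep ++ [aL]).getD i s₀, ?_⟩
    intro f hf
    have hwf : interProd mW a t (gseq f) ∈ A :=
      hw _ (Finset.mem_image_of_mem gseq hf)
    have hmeq : G.card = vals.length := by
      rw [hvals, List.length_map]; exact hcard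
    suffices heq : interProd G.card (fun i => (sep ++ [aL]).getD i s₀)
        (fun j => x ((G.orderIsoOfFin rfl j : ℕ))) f = interProd mW a t (gseq f) by
      rw [heq]; exact hwf
    have hLbne : ∀ j, Lb j ≠ [] := fun j => by
      rw [hLb]
      simpa using hLne j
    have hflatLb : flatJ mW Lb = vals := by
      rw [hLb, hvals, hflat]
      exact flatJ_map x mW Lraw
    have hseplen : sep.length = vals.length := by
      rw [hsep, sepJ_length s₀ mW a Lb hLbne, hflatLb]
    have hta : ∀ i : Fin G.card, x ((G.orderIsoOfFin rfl i : ℕ)) = vals.getD (i : ℕ) 0 := by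
      intro i
      have hiv : (i : ℕ) < vals.length := by rw [← hmeq]; exact i.2
      rw [List.getD_eq_getElem vals 0 hiv]
      simp only [Finset.coe_orderIsoOfFin_apply, Finset.orderEmbOfFin_apply, hGsort]
      simp [hvals]
    apply WithOne.coe_inj.mp
    rw [coe_interProd' s₀ vals sep hseplen aL G.card hmeq _ (fun i => rfl) _ hta f]
    rw [← assemble s₀ f mW a t Lb hLbne (gseq f)
      (fun j => by
        show inner s₀ (fun c => f (x c)) (Lraw j) = inner s₀ f (Lb j)
        rw [inner_map, hLb])]
    rw [hflatLb]

end JAux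

namespace JAux2

open Filter

attribute [local instance] Ultrafilter.add Ultrafilter.addSemigroup

theorem FS_exists_finset {b : Stream' ℕ} {m : ℕ} (h : m ∈ Hindman.FS b) :
    ∃ Cn : Finset ℕ, Cn.Nonempty ∧ m = ∑ i ∈ Cn, b.get i := by
  induction h with
  | head' a => exact ⟨{0}, ⟨0, by simp⟩, by simp⟩
  | tail' a m h ih =>
      obtain ⟨Cn, hCne, hsum⟩ := ih
      refine ⟨Cn.image (· + 1), hCne.image _, ?_⟩
      rw [Finset.sum_image (by intro a _ b _ hab; simp only at hab; omega)]
      rw [hsum]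
      exact Finset.sum_congr rfl fun i _ => rfl
  | cons' a m h ih =>
      obtain ⟨Cn, hCne, hsum⟩ := ih
      refine ⟨insert 0 (Cn.image (· + 1)), ⟨0, Finset.mem_insert_self _ _⟩, ?_⟩
      rw [Finset.sum_insert (by simp)]
      rw [Finset.sum_image (by intro a _ b _ hab; simp only at hab; omega)]
      rw [hsum]
      exact congrArg (a.get 0 + ·) (Finset.sum_congr rfl fun i _ => rfl)

theorem FS_drop_finset (x : ℕ → ℕ) (n : ℕ) {m : ℕ}
    (h : m ∈ Hindman.FS (Stream'.drop n x)) :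
    ∃ Cn : Finset ℕ, Cn.Nonempty ∧ (∀ i ∈ Cn, n ≤ i) ∧ m = ∑ i ∈ Cn, x i := by
  obtain ⟨Cn, hne, hsum⟩ := FS_exists_finset h
  refine ⟨Cn.image (· + n), hne.image _, by simp, ?_⟩
  rw [Finset.sum_image (by intro a _ b _ hab; simp only at hab; omega), hsum]
  exact Finset.sum_congr rfl fun i _ => rfl

theorem exists_idem (x : Stream' ℕ) :
    ∃ U : Ultrafilter ℕ, U + U = U ∧ ∀ n, {m | m ∈ Hindman.FS (x.drop n)} ∈ U := by
  let S : Set (Ultrafilter ℕ) := ⋂ n, { U | ∀ᶠ m in U, m ∈ Hindman.FS (x.drop n) }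
  have h := exists_idempotent_in_compact_add_subsemigroup ?_ S ?_ ?_ ?_
  · rcases h with ⟨U, hU, U_idem⟩
    exact ⟨U, U_idem, fun n => Set.mem_iInter.mp hU n⟩
  · exact Ultrafilter.continuous_add_left
  · apply IsCompact.nonempty_iInter_of_sequence_nonempty_isCompact_isClosed
    · intro n U hU
      filter_upwards [hU]
      rw [← Stream'.drop_drop, ← Stream'.tail_eq_drop]
      exact fun m hm => Hindman.FS.tail _ m hm
    · intro n
      exact ⟨pure _, mem_pure.mpr <| Hindman.FS.head _⟩
    · exact (ultrafilter_isClosed_basic _).isCompact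
    · intro n
      apply ultrafilter_isClosed_basic
  · exact IsClosed.isCompact (isClosed_iInter fun i => ultrafilter_isClosed_basic _)
  · intro U hU V hV
    rw [Set.mem_iInter] at *
    intro n
    rw [Set.mem_setOf_eq, Ultrafilter.eventually_add]
    filter_upwards [hU n] with m hm
    obtain ⟨n', hn⟩ := Hindman.FS.add hm
    filter_upwards [hV (n + n')] with m' hm'
    apply hn
    simpa only [Stream'.drop_drop] using hm'

variable (U : Ultrafilter ℕ)

def starS (B : Set ℕ) : Set ℕ := B ∩ {m | {m' | m + m' ∈ B} ∈ U}

theorem starS_subset (B : Set ℕ) : starS U B ⊆ B := Set.inter_subset_left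

theorem starS_mem (hU : U + U = U) {B : Set ℕ} (hB : B ∈ U) : starS U B ∈ U := by
  have h2 : ∀ᶠ m in ↑(U + U), m ∈ B := by rw [hU]; exact hB
  have h3 := (Ultrafilter.eventually_add U U (· ∈ B)).mp h2
  exact inter_mem hB h3

theorem starS_mem' (hU : U + U = U) {B : Set ℕ} {m : ℕ} (hm : m ∈ starS U B) :
    {m' | m + m' ∈ starS U B} ∈ U := by
  obtain ⟨hmB, hQ⟩ := hm
  have hQ' : {m' | m + m' ∈ B} ∈ U := hQ
  have h2 : ∀ᶠ m' in ↑(U + U), m + m' ∈ B := by rw [hU]; exact hQ'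
  have h3 := (Ultrafilter.eventually_add U U _).mp h2
  have h4 : {m' | {m'' | (m + m') + m'' ∈ B} ∈ U} ∈ U := by
    filter_upwards [h3] with m' hm'
    simp only [add_assoc] at hm' ⊢
    exact hm'
  have h5 := inter_mem hQ' h4
  apply mem_of_superset h5
  rintro m' ⟨h6, h7⟩
  exact ⟨h6, h7⟩

variable (x : ℕ → ℕ) (hU : U + U = U)
  (htails : ∀ n, {m | m ∈ Hindman.FS (Stream'.drop n x)} ∈ U)

noncomputable def pick (p : {p : Set ℕ × ℕ // p.1 ∈ U}) : ℕ :=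
  (Ultrafilter.nonempty_of_mem
    (inter_mem (starS_mem U hU p.2) (htails p.1.2))).some

theorem pick_mem (p : {p : Set ℕ × ℕ // p.1 ∈ U}) :
    pick U x hU htails p ∈ starS U p.1.1 ∩ {m | m ∈ Hindman.FS (Stream'.drop p.1.2 x)} :=
  Set.Nonempty.some_mem _

noncomputable def blk (p : {p : Set ℕ × ℕ // p.1 ∈ U}) : Finset ℕ :=
  (FS_drop_finset x p.1.2 (pick_mem U x hU htails p).2).choose

theorem blk_spec (p : {p : Set ℕ × ℕ // p.1 ∈ U}) :
    (blk U x hU htails p).Nonempty ∧ (∀ i ∈ blk U x hU htails p, p.1.2 ≤ i) ∧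
      pick U x hU htails p = ∑ i ∈ blk U x hU htails p, x i :=
  (FS_drop_finset x p.1.2 (pick_mem U x hU htails p).2).choose_spec

noncomputable def step (p : {p : Set ℕ × ℕ // p.1 ∈ U}) : {p : Set ℕ × ℕ // p.1 ∈ U} :=
  ⟨(starS U p.1.1 ∩ {m' | pick U x hU htails p + m' ∈ starS U p.1.1},
      (blk U x hU htails p).max' (blk_spec U x hU htails p).1 + 1),
    inter_mem (starS_mem U hU p.2) (starS_mem' U hU (pick_mem U x hU htails p).1)⟩

noncomputable def gst (B₀ : Set ℕ) (hB₀ : B₀ ∈ U) : ℕ → {p : Set ℕ × ℕ // p.1 ∈ U} :=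
  fun n => (step U x hU htails)^[n] ⟨(B₀, 0), hB₀⟩

theorem gst_succ (B₀ : Set ℕ) (hB₀ : B₀ ∈ U) (n : ℕ) :
    gst U x hU htails B₀ hB₀ (n+1) = step U x hU htails (gst U x hU htails B₀ hB₀ n) := by
  unfold gst
  rw [Function.iterate_succ_apply']

end JAux2

namespace JAux2

open Filter

attribute [local instance] Ultrafilter.add Ultrafilter.addSemigroup

variable (U : Ultrafilter ℕ) (x : ℕ → ℕ) (hU : U + U = U)
  (htails : ∀ n, {m | m ∈ Hindman.FS (Stream'.drop n x)} ∈ U)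
  (B₀ : Set ℕ) (hB₀ : B₀ ∈ U)

theorem B_succ (n : ℕ) :
    (gst U x hU htails B₀ hB₀ (n+1)).1.1
      = starS U (gst U x hU htails B₀ hB₀ n).1.1
        ∩ {m' | pick U x hU htails (gst U x hU htails B₀ hB₀ n) + m'
            ∈ starS U (gst U x hU htails B₀ hB₀ n).1.1} := by
  rw [gst_succ]
  rfl

theorem bnd_succ (n : ℕ) :
    (gst U x hU htails B₀ hB₀ (n+1)).1.2
      = (blk U x hU htails (gst U x hU htails B₀ hB₀ n)).max'
          (blk_spec U x hU htails _).1 + 1 := by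
  rw [gst_succ]
  rfl

theorem B_succ_subset (n : ℕ) :
    (gst U x hU htails B₀ hB₀ (n+1)).1.1 ⊆ (gst U x hU htails B₀ hB₀ n).1.1 := by
  rw [B_succ]
  exact Set.inter_subset_left.trans (starS_subset U _)

theorem B_mono {n k : ℕ} (h : n ≤ k) :
    (gst U x hU htails B₀ hB₀ k).1.1 ⊆ (gst U x hU htails B₀ hB₀ n).1.1 := by
  induction k, h using Nat.le_induction with
  | base => exact subset_rfl
  | succ k hk ih => exact (B_succ_subset U x hU htails B₀ hB₀ k).trans ih

theorem bnd_mono_succ (n : ℕ) :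
    (gst U x hU htails B₀ hB₀ n).1.2 ≤ (gst U x hU htails B₀ hB₀ (n+1)).1.2 := by
  rw [bnd_succ]
  obtain ⟨i, hi⟩ := (blk_spec U x hU htails (gst U x hU htails B₀ hB₀ n)).1
  have h1 := (blk_spec U x hU htails (gst U x hU htails B₀ hB₀ n)).2.1 i hi
  have h2 := Finset.le_max' _ i hi
  omega

theorem bnd_mono {n k : ℕ} (h : n ≤ k) :
    (gst U x hU htails B₀ hB₀ n).1.2 ≤ (gst U x hU htails B₀ hB₀ k).1.2 := by
  induction k, h using Nat.le_induction with
  | base => exact le_rfl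
  | succ k hk ih => exact ih.trans (bnd_mono_succ U x hU htails B₀ hB₀ k)

theorem cross {k l : ℕ} (h : k < l) :
    ∀ i ∈ blk U x hU htails (gst U x hU htails B₀ hB₀ k),
    ∀ j ∈ blk U x hU htails (gst U x hU htails B₀ hB₀ l), i < j := by
  intro i hi j hj
  have h1 : i ≤ (blk U x hU htails (gst U x hU htails B₀ hB₀ k)).max'
      (blk_spec U x hU htails _).1 := Finset.le_max' _ i hi
  have h2 : (gst U x hU htails B₀ hB₀ (k+1)).1.2 ≤ (gst U x hU htails B₀ hB₀ l).1.2 :=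
    bnd_mono U x hU htails B₀ hB₀ h
  have h3 := (blk_spec U x hU htails (gst U x hU htails B₀ hB₀ l)).2.1 j hj
  have h4 := bnd_succ U x hU htails B₀ hB₀ k
  omega

theorem sums_mem :
    ∀ (T : Finset ℕ) (hT : T.Nonempty),
      (∑ k ∈ T, pick U x hU htails (gst U x hU htails B₀ hB₀ k))
        ∈ (gst U x hU htails B₀ hB₀ (T.min' hT)).1.1 := by
  intro T
  induction T using Finset.strongInductionOn with
  | _ T ih =>
    intro hT
    have hmem : T.min' hT ∈ T := T.min'_mem hT
    rw [← Finset.add_sum_erase _ _ hmem]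
    rcases (T.erase (T.min' hT)).eq_empty_or_nonempty with he | hne2
    · rw [he, Finset.sum_empty, add_zero]
      exact starS_subset U _ (pick_mem U x hU htails _).1
    · have hrec := ih (T.erase (T.min' hT)) (Finset.erase_ssubset hmem) hne2
      have hlt : T.min' hT + 1 ≤ (T.erase (T.min' hT)).min' hne2 :=
        Nat.succ_le_of_lt (Finset.min'_lt_of_mem_erase_min' _ _ (Finset.min'_mem _ _))
      have hsub := B_mono U x hU htails B₀ hB₀ hlt
      have h5 := hsub hrec
      rw [B_succ] at h5
      exact starS_subset U _ h5.2

include U hU htails hB₀ in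
theorem gg :
    ∃ C : ℕ → Finset ℕ, (∀ n, (C n).Nonempty) ∧
      (∀ k l : ℕ, k < l → ∀ i ∈ C k, ∀ j ∈ C l, i < j) ∧
      ∀ T : Finset ℕ, T.Nonempty → (∑ k ∈ T, ∑ i ∈ C k, x i) ∈ B₀ := by
  refine ⟨fun n => blk U x hU htails (gst U x hU htails B₀ hB₀ n),
    fun n => (blk_spec U x hU htails _).1,
    fun k l h => cross U x hU htails B₀ hB₀ h, ?_⟩
  intro T hT
  have h1 : (∑ k ∈ T, ∑ i ∈ blk U x hU htails (gst U x hU htails B₀ hB₀ k), x i)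
      = ∑ k ∈ T, pick U x hU htails (gst U x hU htails B₀ hB₀ k) :=
    Finset.sum_congr rfl fun k _ => ((blk_spec U x hU htails _).2.2).symm
  rw [h1]
  have h2 := sums_mem U x hU htails B₀ hB₀ T hT
  have h3 := B_mono U x hU htails B₀ hB₀ (Nat.zero_le (T.min' hT))
  exact h3 h2

end JAux2

/-- If `A` is a J-set, `F` a finite nonempty set of sequences and `⟨x_n⟩` a sequence in
`ℕ`, then there is a sub-IP-set `FS(⟨y_n⟩) ⊆ FS(⟨x_n⟩)` each of whose elements
`∑_{t ∈ G} x_t` (with `G = {t₁ < … < t_m}`) admits `a ∈ S^{m+1}` with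
`a₁·f(x_{t₁})·a₂·f(x_{t₂})⋯a_m·f(x_{t_m})·a_{m+1} ∈ A` for every `f ∈ F`. -/
theorem jsetNC_sub_ipset {S : Type*} [Semigroup S] {A : Set S} (hA : IsJSetNC A)
    (F : Finset (ℕ → S)) (hF : F.Nonempty) (x : ℕ → ℕ) :
    ∃ y : ℕ → ℕ, FS y ⊆ FS x ∧
      ∀ s ∈ FS y, ∃ G : Finset ℕ, G.Nonempty ∧ s = ∑ t ∈ G, x t ∧
        ∃ a : Fin (G.card + 1) → S,
          ∀ f ∈ F, interProd G.card a (fun j => x ((G.orderIsoOfFin rfl j : ℕ))) f ∈ A := by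
  classical
  obtain ⟨U, hU, htails⟩ := JAux2.exists_idem x
  set Dset : Set ℕ := {s : ℕ | ∃ G : Finset ℕ, G.Nonempty ∧ s = ∑ u ∈ G, x u ∧
    ∃ a : Fin (G.card + 1) → S,
      ∀ f ∈ F, interProd G.card a (fun j => x ((G.orderIsoOfFin rfl j : ℕ))) f ∈ A} with hD
  have hDU : Dset ∈ U := by
    by_contra hc
    have hcompl : Dsetᶜ ∈ U := Ultrafilter.compl_mem_iff_notMem.mpr hc
    obtain ⟨C, hCne, hCinc, hCsum⟩ := JAux2.gg U x hU htails (Dsetᶜ) hcompl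
    obtain ⟨T, hTne, hTmem⟩ := JAux.claimA hA F hF x C hCne hCinc
    exact (hCsum T hTne) hTmem
  obtain ⟨C, hCne, hCinc, hCsum⟩ := JAux2.gg U x hU htails Dset hDU
  refine ⟨fun n => ∑ i ∈ C n, x i, ?_, ?_⟩
  · rintro s ⟨N, hNne, rfl⟩
    obtain ⟨G, hGne, hGsum, _⟩ := hCsum N hNne
    exact ⟨G, hGne, hGsum⟩
  · rintro s ⟨N, hNne, rfl⟩
    exact hCsum N hNne
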